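/- In the Gaussian sequence model with block structure, assume that for every j, p_j − s_j > 1, s_j > 1, and the betamin condition β*_{min,j} ≥ √(2 ln(p_j − s_j)/n) + √(2 ln(s_j)/n) holds for every sufficiently large n. Define the oracle thresholds τ*_j = β*_{min,j}/2 + ln(p_j/s_j − 1)/(n β*_{min,j}). Then the thresholds τ*_j satisfy Assumption A4 (√n τ*_j ≥ √(2 ln(p_j − s_j)) eventually) and Assumption A5 (√n(β*_{min,j} − τ*_j) ≥ √(2 ln s_j) eventually), and the block threshold selector Ŝ^b using thresholds τ*_j satisfies, for every sufficiently large n: P(Ŝ^b ≠ S) ≤ 2 Σ_{j=1}^b e^{−[ (n/8)(β*_{min,j})² − ln max{p_j − s_j, s_j} ]}. (Theorem 3.4, second part: oracle thresholds and oracle convergence rate.) -/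

import Mathlib

open MeasureTheory ProbabilityTheory Filter Finset
open scoped NNReal

/-- Number of truly inactive coordinates in block `j` (that is, `p_j − s_j`). -/
noncomputable def inactJ {P b : ℕ} (blk : Fin P → Fin b) (βs : Fin P → ℝ) (j : Fin b) : ℕ :=
  (Finset.univ.filter (fun i => blk i = j ∧ βs i = 0)).card

/-- Number of truly active coordinates in block `j` (that is, `s_j`). -/
noncomputable def actJ {P b : ℕ} (blk : Fin P → Fin b) (βs : Fin P → ℝ) (j : Fin b) : ℕ :=
  (Finset.univ.filter (fun i => blk i = j ∧ βs i ≠ 0)).card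

/-- Number of coordinates in block `j` (that is, `p_j`). -/
noncomputable def blkCard {P b : ℕ} (blk : Fin P → Fin b) (j : Fin b) : ℕ :=
  (Finset.univ.filter (fun i => blk i = j)).card

/-- The oracle threshold `τ*_j = β*_{min,j}/2 + ln(p_j/s_j − 1)/(n β*_{min,j})`. -/
noncomputable def tauStar {b : ℕ} (p : ℕ → ℕ) (blk : (n : ℕ) → Fin (p n) → Fin b)
    (βs : (n : ℕ) → Fin (p n) → ℝ) (βmin : ℕ → Fin b → ℝ) (n : ℕ) (j : Fin b) : ℝ :=
  βmin n j / 2 +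
    Real.log ((blkCard (blk n) j : ℝ) / (actJ (blk n) (βs n) j : ℝ) - 1) /
      (n * βmin n j)


open Real

lemma gauss_half (t : ℝ) {v : ℝ≥0} (hv : v ≠ 0) :
    gaussianReal t v {x | t ≤ x} = 1/2 := by
  set M := gaussianReal t v with hM
  have hm1 : Measurable fun x : ℝ => (-1 : ℝ) * x := by fun_prop
  have hm2 : Measurable fun x : ℝ => 2*t + x := by fun_prop
  have hm3 : Measurable fun x : ℝ => 2*t + (-1) * x := by fun_prop
  have hmap : M.map (fun x : ℝ => 2*t + (-1) * x) = M := by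
    have h1 : M.map (fun x : ℝ => (-1) * x) = gaussianReal (-t) v := by
      rw [hM, gaussianReal_map_const_mul]
      congr 1
      · ring
      · ext; simp
    have h2 : M.map (fun x : ℝ => 2*t + (-1) * x)
        = (M.map (fun x : ℝ => (-1) * x)).map (fun x => 2*t + x) := by
      rw [Measure.map_map hm2 hm1]; rfl
    rw [h2, h1, gaussianReal_map_const_add, hM]
    congr 1; ring
  have hsymm : M {x | t ≤ x} = M {x | x ≤ t} := by
    conv_lhs => rw [← hmap]
    rw [Measure.map_apply hm3 (by exact measurableSet_Ici)]
    congr 1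
    ext x
    simp only [Set.mem_preimage, Set.mem_Ici, Set.mem_setOf_eq]
    constructor <;> intro h <;> linarith
  have hpoint : M {t} = 0 := by
    rw [hM]
    exact (gaussianReal_absolutelyContinuous t hv) (volume_singleton)
  have hunion : M {x | t ≤ x} + M {x | x ≤ t} = 1 + M {t} := by
    have := measure_union_add_inter (μ := M) {x : ℝ | t ≤ x} (t := {x : ℝ | x ≤ t})
      (by exact measurableSet_Iic)
    have h1 : ({x : ℝ | t ≤ x} ∪ {x | x ≤ t}) = Set.univ := by
      ext x; simp [le_total t x]
    have h2 : ({x : ℝ | t ≤ x} ∩ {x | x ≤ t}) = {t} := by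
      ext x; simp only [Set.mem_inter_iff, Set.mem_setOf_eq, Set.mem_singleton_iff]
      constructor
      · rintro ⟨h1', h2'⟩; linarith
      · rintro rfl; exact ⟨le_refl _, le_refl _⟩
    rw [h1, h2, measure_univ] at this
    exact this.symm
  rw [hpoint, add_zero, ← hsymm] at hunion
  have h2 : 2 * M {x | t ≤ x} = 1 := by rw [two_mul, hunion]
  rw [ENNReal.eq_div_iff (by norm_num) (by norm_num), h2]


lemma gauss_tail_ge {μ t : ℝ} {v : ℝ≥0} (hv : v ≠ 0) (h : μ ≤ t) :
    gaussianReal μ v {x | t ≤ x} ≤ ENNReal.ofReal (rexp (-(t-μ)^2/(2*v)) / 2) := by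
  have hs : MeasurableSet {x : ℝ | t ≤ x} := by exact measurableSet_Ici
  have key : ∀ x ∈ {x : ℝ | t ≤ x}, gaussianPDF μ v x ≤
      ENNReal.ofReal (rexp (-(t-μ)^2/(2*v))) * gaussianPDF t v x := by
    intro x hx
    simp only [Set.mem_setOf_eq] at hx
    rw [gaussianPDF, gaussianPDF, ← ENNReal.ofReal_mul (by positivity)]
    apply ENNReal.ofReal_le_ofReal
    rw [gaussianPDFReal, gaussianPDFReal]
    rw [show rexp (-(t-μ)^2/(2*(v:ℝ))) * ((√(2 * Real.pi * (v:ℝ)))⁻¹ * rexp (- (x - t)^2 / (2 * (v:ℝ))))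
      = (√(2 * Real.pi * (v:ℝ)))⁻¹ * (rexp (- (x - t)^2 / (2 * (v:ℝ))) * rexp (-(t-μ)^2/(2*(v:ℝ)))) by ring]
    apply mul_le_mul_of_nonneg_left _ (by positivity)
    rw [← Real.exp_add]
    apply Real.exp_le_exp.2
    have hv0 : (0:ℝ) < (v:ℝ) := by positivity
    rw [div_add_div _ _ (by positivity) (by positivity), div_le_div_iff₀ (by positivity) (by positivity)]
    nlinarith [mul_nonneg (sub_nonneg.2 hx) (sub_nonneg.2 h), sq_nonneg ((x-t)*(t-μ))]
  calc gaussianReal μ v {x | t ≤ x} = ∫⁻ x in {x | t ≤ x}, gaussianPDF μ v x := by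
        rw [gaussianReal_apply _ hv]
    _ ≤ ∫⁻ x in {x | t ≤ x}, ENNReal.ofReal (rexp (-(t-μ)^2/(2*v))) * gaussianPDF t v x :=
        setLIntegral_mono (by exact (measurable_gaussianPDF t v).const_mul _) key
    _ = ENNReal.ofReal (rexp (-(t-μ)^2/(2*v))) * ∫⁻ x in {x | t ≤ x}, gaussianPDF t v x := by
        rw [lintegral_const_mul _ (measurable_gaussianPDF t v)]
    _ = ENNReal.ofReal (rexp (-(t-μ)^2/(2*v))) * (1/2) := by
        rw [← gaussianReal_apply _ hv, gauss_half _ hv]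
    _ ≤ ENNReal.ofReal (rexp (-(t-μ)^2/(2*v)) / 2) := by
        rw [ENNReal.ofReal_div_of_pos (by norm_num), ENNReal.ofReal_ofNat,
          ENNReal.div_eq_inv_mul, mul_one, mul_comm]
        rw [ENNReal.div_eq_inv_mul]

lemma gauss_tail_le {μ t : ℝ} {v : ℝ≥0} (hv : v ≠ 0) (h : t ≤ μ) :
    gaussianReal μ v {x | x ≤ t} ≤ ENNReal.ofReal (rexp (-(μ-t)^2/(2*v)) / 2) := by
  have hmap : (gaussianReal μ v).map (fun x : ℝ => (-1) * x) = gaussianReal (-μ) v := by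
    rw [gaussianReal_map_const_mul]
    congr 1
    · ring
    · ext; simp
  have heq : gaussianReal μ v {x | x ≤ t} = gaussianReal (-μ) v {x | -t ≤ x} := by
    rw [← hmap, Measure.map_apply (by fun_prop) (by exact measurableSet_Ici)]
    congr 1
    ext x
    simp only [Set.mem_preimage, Set.mem_Ici, Set.mem_setOf_eq]
    constructor <;> intro hx <;> linarith
  rw [heq]
  have := gauss_tail_ge (μ := -μ) (t := -t) hv (by linarith)
  convert this using 4
  ring

lemma k_alg {nr β L τ : ℝ} (hn : 0 < nr) (hβ : 0 < β) (hτ : τ = β/2 + L/(nr*β)) :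
    nr*β^2/8 + L/2 ≤ nr*τ^2/2 ∧ nr*β^2/8 - L/2 ≤ nr*(β-τ)^2/2 := by
  constructor
  · rw [← sub_nonneg]
    have heq : nr*τ^2/2 - (nr*β^2/8 + L/2) = L^2/(2*nr*β^2) := by
      rw [hτ]; field_simp; ring
    rw [heq]; positivity
  · rw [← sub_nonneg]
    have heq : nr*(β-τ)^2/2 - (nr*β^2/8 - L/2) = L^2/(2*nr*β^2) := by
      rw [hτ]; field_simp; ring
    rw [heq]; positivity

lemma core_alg {n m1 m2 : ℕ} (hn : 1 ≤ n) (hm1 : 2 ≤ m1) (hm2 : 2 ≤ m2) {β τ : ℝ}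
    (hβ : Real.sqrt (2*Real.log m1/n) + Real.sqrt (2*Real.log m2/n) ≤ β)
    (hτ : τ = β/2 + (Real.log m1 - Real.log m2)/(n*β)) :
    Real.sqrt (2*Real.log m1) ≤ Real.sqrt n * τ ∧
    Real.sqrt (2*Real.log m2) ≤ Real.sqrt n * (β-τ) ∧
    (n:ℝ)*β^2/8 + (Real.log m1 - Real.log m2)/2 ≤ (n:ℝ)*τ^2/2 ∧
    (n:ℝ)*β^2/8 - (Real.log m1 - Real.log m2)/2 ≤ (n:ℝ)*(β-τ)^2/2 := by
  have hm1' : (0:ℝ) < Real.log m1 := by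
    apply Real.log_pos; exact_mod_cast Nat.one_lt_cast.mpr hm1
  have hm2' : (0:ℝ) < Real.log m2 := by
    apply Real.log_pos; exact_mod_cast Nat.one_lt_cast.mpr hm2
  have hn' : (0:ℝ) < n := by exact_mod_cast hn
  set U := Real.sqrt (2*Real.log m1) with hU
  set V := Real.sqrt (2*Real.log m2) with hV
  set sn := Real.sqrt n with hsn
  have hsnp : 0 < sn := Real.sqrt_pos.2 hn'
  have hsn2 : sn^2 = n := Real.sq_sqrt hn'.le
  have hUp : 0 < U := Real.sqrt_pos.2 (by positivity)
  have hVp : 0 < V := Real.sqrt_pos.2 (by positivity)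
  have hU2 : U^2 = 2*Real.log m1 := Real.sq_sqrt (by positivity)
  have hV2 : V^2 = 2*Real.log m2 := Real.sq_sqrt (by positivity)
  have hL : Real.log m1 - Real.log m2 = (U^2 - V^2)/2 := by rw [hU2, hV2]; ring
  have hx : U + V ≤ sn * β := by
    have h1 : Real.sqrt (2*Real.log m1/n) = U / sn := Real.sqrt_div (by positivity) _
    have h2 : Real.sqrt (2*Real.log m2/n) = V / sn := Real.sqrt_div (by positivity) _
    rw [h1, h2, ← add_div, div_le_iff₀ hsnp] at hβ
    linarith [hβ]
  have hβp : 0 < β := by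
    have h0 : 0 < sn * β := lt_of_lt_of_le (by positivity) hx
    nlinarith [hsnp, h0]
  set x := sn * β with hxd
  have hxp : 0 < x := by positivity
  have hτ' : sn * τ = x/2 + (U^2 - V^2)/(2*x) := by
    rw [hτ, hL, ← hsn2]; field_simp; ring
  have hτ'' : sn * (β - τ) = x/2 - (U^2 - V^2)/(2*x) := by
    rw [hτ, hL, ← hsn2]; field_simp; ring
  refine ⟨?_, ?_, ?_, ?_⟩
  · rw [hτ', ← sub_nonneg]
    have heq : x/2 + (U^2 - V^2)/(2*x) - U = ((x-U)^2 - V^2)/(2*x) := by field_simp; ring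
    rw [heq]
    apply div_nonneg _ (by positivity)
    nlinarith [hx]
  · rw [hτ'', ← sub_nonneg]
    have heq : x/2 - (U^2 - V^2)/(2*x) - V = ((x-V)^2 - U^2)/(2*x) := by field_simp; ring
    rw [heq]
    apply div_nonneg _ (by positivity)
    nlinarith [hx]
  · exact (k_alg hn' hβp hτ).1
  · exact (k_alg hn' hβp hτ).2




lemma count_split {P b : ℕ} (blk : Fin P → Fin b) (βs : Fin P → ℝ) (j : Fin b) :
    blkCard blk j = inactJ blk βs j + actJ blk βs j := by
  classical
  unfold blkCard inactJ actJ
  rw [← Finset.filter_filter (fun i => blk i = j) (fun i => βs i = 0),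
    ← Finset.filter_filter (fun i => blk i = j) (fun i => βs i ≠ 0)]
  exact (Finset.card_filter_add_card_filter_not (fun i => βs i = 0)).symm

lemma log_ratio {P b : ℕ} (blk : Fin P → Fin b) (βs : Fin P → ℝ) (j : Fin b)
    (h1 : 1 < inactJ blk βs j) (h2 : 1 < actJ blk βs j) :
    Real.log ((blkCard blk j : ℝ)/(actJ blk βs j : ℝ) - 1)
      = Real.log (inactJ blk βs j) - Real.log (actJ blk βs j) := by
  have hc := count_split blk βs j
  have hp1 : (0:ℝ) < (inactJ blk βs j : ℝ) := by exact_mod_cast Nat.lt_of_lt_of_le Nat.zero_lt_one h1.le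
  have hp2 : (0:ℝ) < (actJ blk βs j : ℝ) := by exact_mod_cast Nat.lt_of_lt_of_le Nat.zero_lt_one h2.le
  have harg : (blkCard blk j : ℝ)/(actJ blk βs j : ℝ) - 1
      = (inactJ blk βs j : ℝ)/(actJ blk βs j : ℝ) := by
    rw [hc]; push_cast; field_simp; ring
  rw [harg, Real.log_div (ne_of_gt hp1) (ne_of_gt hp2)]





lemma main_bound {P b : ℕ} {Ω : Type} [MeasurableSpace Ω] (Pr : Measure Ω)
    [IsProbabilityMeasure Pr]
    (blk : Fin P → Fin b) (βs : Fin P → ℝ) (βt : Fin P → Ω → ℝ)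
    (hmeas : ∀ i, Measurable (βt i))
    (n : ℕ) (hn : 1 ≤ n)
    (hlaw : ∀ i, Measure.map (βt i) Pr = gaussianReal (βs i) ((n:ℝ≥0))⁻¹)
    (β τ : Fin b → ℝ)
    (hβlow : ∀ i, βs i ≠ 0 → β (blk i) ≤ |βs i|)
    (hτ0 : ∀ j, 0 ≤ τ j) (hd0 : ∀ j, 0 ≤ β j - τ j)
    (K1 : ∀ j, (n:ℝ)*(β j)^2/8 +
      (Real.log (inactJ blk βs j) - Real.log (actJ blk βs j))/2 ≤ (n:ℝ)*(τ j)^2/2)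
    (K2 : ∀ j, (n:ℝ)*(β j)^2/8 -
      (Real.log (inactJ blk βs j) - Real.log (actJ blk βs j))/2 ≤ (n:ℝ)*(β j - τ j)^2/2)
    (hc : ∀ j, 1 < inactJ blk βs j ∧ 1 < actJ blk βs j) :
    (Pr {ω | ¬ ∀ i, (τ (blk i) < |βt i ω| ↔ βs i ≠ 0)}).toReal ≤
      2 * ∑ j : Fin b,
        rexp (-((n/8) * β j ^2 - Real.log (max (inactJ blk βs j) (actJ blk βs j)))) := by
  classical
  have hnR : (0:ℝ) < n := by exact_mod_cast hn
  set v : ℝ≥0 := ((n:ℝ≥0))⁻¹ with hvdef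
  have hvne : v ≠ 0 := by
    rw [hvdef]
    exact inv_ne_zero (Nat.cast_ne_zero.mpr (by omega))
  have hvr : (v : ℝ) = (n:ℝ)⁻¹ := by rw [hvdef]; push_cast; ring
  set c : Fin P → ℝ := fun i => if βs i = 0 then rexp (-((n:ℝ) * (τ (blk i))^2/2))
    else rexp (-((n:ℝ)*(β (blk i) - τ (blk i))^2/2)) with hcdef
  -- per-coordinate bound
  have hpc : ∀ i, Pr {ω | ¬ (τ (blk i) < |βt i ω| ↔ βs i ≠ 0)} ≤ ENNReal.ofReal (c i) := by
    intro i
    by_cases hi : βs i = 0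
    · have hsetEq : {ω | ¬ (τ (blk i) < |βt i ω| ↔ βs i ≠ 0)}
          = βt i ⁻¹' {x | τ (blk i) < |x|} := by
        ext ω; simp [hi]
      have hms : MeasurableSet {x : ℝ | τ (blk i) < |x|} :=
        measurableSet_lt measurable_const continuous_abs.measurable
      rw [hsetEq, ← Measure.map_apply (hmeas i) hms, hlaw i, hi]
      have hsub : {x : ℝ | τ (blk i) < |x|} ⊆ {x | τ (blk i) ≤ x} ∪ {x | x ≤ -(τ (blk i))} := by
        intro x hx
        simp only [Set.mem_setOf_eq, Set.mem_union] at hx ⊢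
        rcases le_or_gt 0 x with h0 | h0
        · left; rw [abs_of_nonneg h0] at hx; linarith
        · right; rw [abs_of_neg h0] at hx; linarith
      refine le_trans (measure_mono hsub) (le_trans (measure_union_le _ _) ?_)
      have h1 := gauss_tail_ge (μ := 0) (t := τ (blk i)) hvne (hτ0 _)
      have h2 := gauss_tail_le (μ := 0) (t := -(τ (blk i))) hvne (by linarith [hτ0 (blk i)])
      refine le_trans (add_le_add h1 h2) ?_
      rw [← ENNReal.ofReal_add (by positivity) (by positivity)]
      apply ENNReal.ofReal_le_ofReal
      have e1 : -(τ (blk i) - 0)^2/(2*(v:ℝ)) = -((n:ℝ) * (τ (blk i))^2/2) := by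
        rw [hvr]; field_simp; ring
      have e2 : -(0 - -(τ (blk i)))^2/(2*(v:ℝ)) = -((n:ℝ) * (τ (blk i))^2/2) := by
        rw [hvr]; field_simp; ring
      rw [e1, e2, hcdef]
      simp only [hi, if_pos]
      linarith
    · have hsetEq : {ω | ¬ (τ (blk i) < |βt i ω| ↔ βs i ≠ 0)}
          = βt i ⁻¹' {x | ¬ τ (blk i) < |x|} := by
        ext ω; simp [hi]
      have hms : MeasurableSet {x : ℝ | ¬ τ (blk i) < |x|} :=
        (measurableSet_lt measurable_const continuous_abs.measurable).compl
      rw [hsetEq, ← Measure.map_apply (hmeas i) hms, hlaw i]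
      have hβi := hβlow i hi
      have hci : c i = rexp (-((n:ℝ)*(β (blk i) - τ (blk i))^2/2)) := by
        rw [hcdef]; simp only [hi, if_neg, if_false]
      rcases le_or_gt 0 (βs i) with h0 | h0
      · have hμβ : β (blk i) ≤ βs i := by rwa [abs_of_nonneg h0] at hβi
        have hsub : {x : ℝ | ¬ τ (blk i) < |x|} ⊆ {x | x ≤ τ (blk i)} := by
          intro x hx
          simp only [Set.mem_setOf_eq, not_lt] at hx ⊢
          exact le_trans (le_abs_self x) hx
        refine le_trans (measure_mono hsub) (le_trans (gauss_tail_le hvne (by linarith [hd0 (blk i)])) ?_)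
        apply ENNReal.ofReal_le_ofReal
        rw [hci]
        have e1 : -(βs i - τ (blk i))^2/(2*(v:ℝ)) = -((n:ℝ) * (βs i - τ (blk i))^2/2) := by
          rw [hvr]; field_simp
        rw [e1]
        have hmono : rexp (-((n:ℝ) * (βs i - τ (blk i))^2/2))
            ≤ rexp (-((n:ℝ)*(β (blk i) - τ (blk i))^2/2)) := by
          apply Real.exp_le_exp.2
          have hthis := hd0 (blk i)
          nlinarith [mul_nonneg (mul_nonneg hnR.le (sub_nonneg.2 hμβ)) hthis,
            mul_nonneg hnR.le (sq_nonneg (βs i - β (blk i)))]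
        linarith [Real.exp_pos (-((n:ℝ) * (βs i - τ (blk i))^2/2)), hmono]
      · have hμβ : βs i ≤ -(β (blk i)) := by
          rw [abs_of_neg h0] at hβi; linarith
        have hsub : {x : ℝ | ¬ τ (blk i) < |x|} ⊆ {x | -(τ (blk i)) ≤ x} := by
          intro x hx
          simp only [Set.mem_setOf_eq, not_lt] at hx ⊢
          linarith [neg_abs_le x]
        refine le_trans (measure_mono hsub) (le_trans (gauss_tail_ge hvne (by linarith [hd0 (blk i)])) ?_)
        apply ENNReal.ofReal_le_ofReal
        rw [hci]
        have e1 : -(-(τ (blk i)) - βs i)^2/(2*(v:ℝ)) = -((n:ℝ) * (-(τ (blk i)) - βs i)^2/2) := by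
          rw [hvr]; field_simp
        rw [e1]
        have hmono : rexp (-((n:ℝ) * (-(τ (blk i)) - βs i)^2/2))
            ≤ rexp (-((n:ℝ)*(β (blk i) - τ (blk i))^2/2)) := by
          apply Real.exp_le_exp.2
          have hthis := hd0 (blk i)
          have hnb : (0:ℝ) ≤ -βs i - β (blk i) := by linarith
          nlinarith [mul_nonneg (mul_nonneg hnR.le hnb) hthis,
            mul_nonneg hnR.le (sq_nonneg (-βs i - β (blk i)))]
        linarith [Real.exp_pos (-((n:ℝ) * (-(τ (blk i)) - βs i)^2/2)), hmono]
  have hcnn : ∀ i, 0 ≤ c i := by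
    intro i
    rw [hcdef]; dsimp only; split <;> positivity
  have hchain : Pr {ω | ¬ ∀ i, (τ (blk i) < |βt i ω| ↔ βs i ≠ 0)}
      ≤ ENNReal.ofReal (∑ i, c i) := by
    have hsetEq : {ω | ¬ ∀ i, (τ (blk i) < |βt i ω| ↔ βs i ≠ 0)}
        = ⋃ i, {ω | ¬ (τ (blk i) < |βt i ω| ↔ βs i ≠ 0)} := by
      ext ω
      simp only [Set.mem_setOf_eq, Set.mem_iUnion, not_forall]
    rw [hsetEq]
    refine le_trans (measure_iUnion_le _) ?_
    rw [tsum_fintype]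
    refine le_trans (Finset.sum_le_sum (fun i _ => hpc i)) ?_
    rw [← ENNReal.ofReal_sum_of_nonneg (fun i _ => hcnn i)]
  have hsum : ∑ i, c i ≤ 2 * ∑ j : Fin b,
      rexp (-((n/8) * β j ^2 - Real.log (max (inactJ blk βs j) (actJ blk βs j)))) := by
    rw [← Finset.sum_fiberwise Finset.univ blk c, Finset.mul_sum]
    refine Finset.sum_le_sum (fun j _ => ?_)
    have hm1 := (hc j).1
    have hm2 := (hc j).2
    have hm1R : (1:ℝ) < (inactJ blk βs j : ℝ) := by exact_mod_cast hm1
    have hm2R : (1:ℝ) < (actJ blk βs j : ℝ) := by exact_mod_cast hm2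
    set e1 : ℝ := rexp (-((n:ℝ) * (τ j)^2/2)) with he1
    set e2 : ℝ := rexp (-((n:ℝ) * (β j - τ j)^2/2)) with he2
    have hsplit : ∑ i ∈ Finset.univ.filter (fun i => blk i = j), c i
        = (inactJ blk βs j : ℝ) * e1 + (actJ blk βs j : ℝ) * e2 := by
      rw [← Finset.sum_filter_add_sum_filter_not
        (Finset.univ.filter (fun i => blk i = j)) (fun i => βs i = 0) c]
      congr 1
      · have hcongr : ∑ i ∈ (Finset.univ.filter (fun i => blk i = j)).filter
            (fun i => βs i = 0), c i
            = ∑ _i ∈ (Finset.univ.filter (fun i => blk i = j)).filter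
            (fun i => βs i = 0), e1 := by
          refine Finset.sum_congr rfl (fun i hi => ?_)
          simp only [Finset.mem_filter, Finset.mem_univ, true_and] at hi
          rw [hcdef]; dsimp only; rw [if_pos hi.2, hi.1]
        rw [hcongr, Finset.sum_const, nsmul_eq_mul, Finset.filter_filter]
        congr 2
      · have hcongr : ∑ i ∈ (Finset.univ.filter (fun i => blk i = j)).filter
            (fun i => ¬ βs i = 0), c i
            = ∑ _i ∈ (Finset.univ.filter (fun i => blk i = j)).filter
            (fun i => ¬ βs i = 0), e2 := by
          refine Finset.sum_congr rfl (fun i hi => ?_)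
          simp only [Finset.mem_filter, Finset.mem_univ, true_and] at hi
          rw [hcdef]; dsimp only; rw [if_neg hi.2, hi.1]
        rw [hcongr, Finset.sum_const, nsmul_eq_mul, Finset.filter_filter]
        congr 2
    rw [hsplit]
    set maxc : ℝ := max ((inactJ blk βs j : ℕ) : ℝ) ((actJ blk βs j : ℕ) : ℝ) with hmaxc
    have hmax1 : Real.log (inactJ blk βs j) ≤ Real.log maxc := by
      apply Real.log_le_log (by linarith)
      rw [hmaxc]; exact le_max_left _ _
    have hmax2 : Real.log (actJ blk βs j) ≤ Real.log maxc := by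
      apply Real.log_le_log (by linarith)
      rw [hmaxc]; exact le_max_right _ _
    have ht : -((n:ℝ)/8 * β j^2 - Real.log maxc) = Real.log maxc - (n:ℝ)*β j^2/8 := by ring
    have hb1 : (inactJ blk βs j : ℝ) * e1 ≤ rexp (Real.log maxc - (n:ℝ)*β j^2/8) := by
      rw [show ((inactJ blk βs j : ℕ):ℝ) = rexp (Real.log (inactJ blk βs j))
        from (Real.exp_log (by linarith)).symm, he1, ← Real.exp_add]
      apply Real.exp_le_exp.2
      linarith [K1 j]
    have hb2 : (actJ blk βs j : ℝ) * e2 ≤ rexp (Real.log maxc - (n:ℝ)*β j^2/8) := by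
      rw [show ((actJ blk βs j : ℕ):ℝ) = rexp (Real.log (actJ blk βs j))
        from (Real.exp_log (by linarith)).symm, he2, ← Real.exp_add]
      apply Real.exp_le_exp.2
      linarith [K2 j]
    rw [ht]
    linarith [hb1, hb2]
  refine ENNReal.toReal_le_of_le_ofReal (by positivity) ?_
  exact le_trans hchain (ENNReal.ofReal_le_ofReal hsum)

/-- **Theorem 3.4, second part.** In the Gaussian sequence model with block structure,
if `p_j − s_j > 1`, `s_j > 1` and the betamin condition
`β*_{min,j} ≥ √(2 ln(p_j−s_j)/n) + √(2 ln(s_j)/n)` holds eventually for every block,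
then the oracle thresholds `τ*_j = β*_{min,j}/2 + ln(p_j/s_j − 1)/(n β*_{min,j})` satisfy
Assumptions A4 and A5, and the block threshold selector with thresholds `τ*_j` satisfies,
for all sufficiently large `n`,
`P(Ŝᵇ ≠ S) ≤ 2 ∑_j e^{−[(n/8)(β*_{min,j})² − ln max{p_j−s_j, s_j}]}`. -/
theorem stmt10 (b : ℕ) (p : ℕ → ℕ)
    (blk : (n : ℕ) → Fin (p n) → Fin b)
    (βs : (n : ℕ) → Fin (p n) → ℝ)
    (Ω : ℕ → Type) [∀ n, MeasurableSpace (Ω n)]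
    (Pr : (n : ℕ) → Measure (Ω n)) [∀ n, IsProbabilityMeasure (Pr n)]
    (βt : (n : ℕ) → Fin (p n) → Ω n → ℝ)
    (hmeas : ∀ n i, Measurable (βt n i))
    (hindep : ∀ n, iIndepFun (βt n) (Pr n))
    (hlaw : ∀ n i, Measure.map (βt n i) (Pr n) =
      gaussianReal (βs n i) ((n : ℝ≥0))⁻¹)
    (βmin : ℕ → Fin b → ℝ)
    (hβmin : ∀ n j, (∀ i : Fin (p n), blk n i = j → βs n i ≠ 0 → βmin n j ≤ |βs n i|) ∧
      ∃ i : Fin (p n), blk n i = j ∧ βs n i ≠ 0 ∧ βmin n j = |βs n i|)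
    (hcard : ∀ n j, 1 < inactJ (blk n) (βs n) j ∧ 1 < actJ (blk n) (βs n) j)
    (hbetamin : ∀ j, ∀ᶠ n : ℕ in atTop,
      Real.sqrt (2 * Real.log (inactJ (blk n) (βs n) j) / n) +
        Real.sqrt (2 * Real.log (actJ (blk n) (βs n) j) / n) ≤ βmin n j) :
    (∀ j, ∀ᶠ n : ℕ in atTop,
      Real.sqrt (2 * Real.log (inactJ (blk n) (βs n) j)) ≤
        Real.sqrt n * tauStar p blk βs βmin n j) ∧
    (∀ j, ∀ᶠ n : ℕ in atTop,
      Real.sqrt (2 * Real.log (actJ (blk n) (βs n) j)) ≤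
        Real.sqrt n * (βmin n j - tauStar p blk βs βmin n j)) ∧
    (∀ᶠ n : ℕ in atTop,
      (Pr n {ω | ¬ ∀ i : Fin (p n),
          (tauStar p blk βs βmin n (blk n i) < |βt n i ω| ↔ βs n i ≠ 0)}).toReal ≤
        2 * ∑ j : Fin b,
          Real.exp (-((n / 8) * βmin n j ^ 2 -
            Real.log (max (inactJ (blk n) (βs n) j) (actJ (blk n) (βs n) j))))) := by
  classical
  have hkey : ∀ n : ℕ, 1 ≤ n → ∀ j : Fin b,
      (Real.sqrt (2 * Real.log (inactJ (blk n) (βs n) j) / n) +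
        Real.sqrt (2 * Real.log (actJ (blk n) (βs n) j) / n) ≤ βmin n j) →
      Real.sqrt (2*Real.log (inactJ (blk n) (βs n) j)) ≤
        Real.sqrt n * tauStar p blk βs βmin n j ∧
      Real.sqrt (2*Real.log (actJ (blk n) (βs n) j)) ≤
        Real.sqrt n * (βmin n j - tauStar p blk βs βmin n j) ∧
      (n:ℝ)*(βmin n j)^2/8 +
          (Real.log (inactJ (blk n) (βs n) j) - Real.log (actJ (blk n) (βs n) j))/2 ≤
        (n:ℝ)*(tauStar p blk βs βmin n j)^2/2 ∧
      (n:ℝ)*(βmin n j)^2/8 -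
          (Real.log (inactJ (blk n) (βs n) j) - Real.log (actJ (blk n) (βs n) j))/2 ≤
        (n:ℝ)*(βmin n j - tauStar p blk βs βmin n j)^2/2 := by
    intro n hn j hj
    have hτ : tauStar p blk βs βmin n j = βmin n j / 2 +
        (Real.log (inactJ (blk n) (βs n) j) - Real.log (actJ (blk n) (βs n) j)) /
          (n * βmin n j) := by
      rw [tauStar, log_ratio _ _ _ (hcard n j).1 (hcard n j).2]
    exact core_alg hn (hcard n j).1 (hcard n j).2 hj hτ
  refine ⟨?_, ?_, ?_⟩
  · intro j
    filter_upwards [eventually_ge_atTop 1, hbetamin j] with n hn1 hbj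
    exact (hkey n hn1 j hbj).1
  · intro j
    filter_upwards [eventually_ge_atTop 1, hbetamin j] with n hn1 hbj
    exact (hkey n hn1 j hbj).2.1
  · filter_upwards [eventually_ge_atTop 1, eventually_all.2 hbetamin] with n hn1 hall
    refine main_bound (Pr n) (blk n) (βs n) (βt n) (hmeas n) n hn1 (hlaw n)
      (βmin n) (fun j => tauStar p blk βs βmin n j)
      (fun i hi => (hβmin n (blk n i)).1 i rfl hi) ?_ ?_
      (fun j => (hkey n hn1 j (hall j)).2.2.1)
      (fun j => (hkey n hn1 j (hall j)).2.2.2)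
      (hcard n)
    · intro j
      have hsn : 0 < Real.sqrt (n:ℝ) := Real.sqrt_pos.2 (by exact_mod_cast hn1)
      have h := le_trans (Real.sqrt_nonneg _) (hkey n hn1 j (hall j)).1
      nlinarith [hsn, h]
    · intro j
      have hsn : 0 < Real.sqrt (n:ℝ) := Real.sqrt_pos.2 (by exact_mod_cast hn1)
      have h := le_trans (Real.sqrt_nonneg _) (hkey n hn1 j (hall j)).2.1
      nlinarith [hsn, h]
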